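/- Let N = {1,…,n} with n ≥ 1, let S ⊆ N be a singleton (|S| = 1), let the Shapley interaction weights be p_t^1(n) := 1/(n · C(n−1, t)), and let leverage sampling be P(T) := 1/((n+1) · C(n, |T|)). Then the variance factor satisfies the exact identity Γ_S(P) = 2(n+1) · H_n / n, where H_n := ∑_{j=1}^{n} 1/j is the n-th harmonic number. -/

import Mathlib

open Finset

/-- Shapley interaction weight for singletons: `p_t^1(n) = 1/(n · C(n−1, t))`. -/
noncomputable def shapW1 (n t : ℕ) : ℝ :=
  1 / ((n : ℝ) * (Nat.choose (n - 1) t : ℝ))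

/-- Leverage-sampling probability `P(T) = 1/((n+1) C(n, |T|))`. -/
noncomputable def lev (n : ℕ) (T : Finset (Fin n)) : ℝ :=
  1 / (((n + 1 : ℕ) : ℝ) * (Nat.choose n T.card : ℝ))

private lemma sum_powerset_card_fn {α : Type*} [DecidableEq α] (s : Finset α)
    (f : Finset α → ℝ) (h : ℕ → ℝ) (hf : ∀ T ⊆ s, f T = h T.card) :
    ∑ T ∈ s.powerset, f T
      = ∑ j ∈ Finset.range (s.card + 1), (s.card.choose j : ℝ) * h j := by
  rw [Finset.sum_powerset]
  refine Finset.sum_congr rfl fun j hj => ?_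
  calc ∑ T ∈ Finset.powersetCard j s, f T
      = ∑ T ∈ Finset.powersetCard j s, h j := by
        refine Finset.sum_congr rfl fun T hT => ?_
        obtain ⟨hTs, hTc⟩ := Finset.mem_powersetCard.mp hT
        rw [hf T hTs, hTc]
    _ = (s.card.choose j : ℝ) * h j := by
        rw [Finset.sum_const, Finset.card_powersetCard, nsmul_eq_mul]

/-- For a singleton `S` (|S| = 1), the variance factor under leverage sampling is
exactly `Γ_S(P) = 2(n+1) H_n / n`, where `H_n` is the n-th harmonic number. -/
theorem gamma_singleton_leverage (n : ℕ) (hn : 1 ≤ n)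
    (S : Finset (Fin n)) (hS : S.card = 1) :
    (∑ T : Finset (Fin n),
        (shapW1 n (T.card - (S ∩ T).card)) ^ 2 / lev n T)
      = 2 * ((n : ℝ) + 1) * (∑ j ∈ Finset.range n, (1 : ℝ) / (j + 1)) / n := by
  obtain ⟨i, rfl⟩ := Finset.card_eq_one.mp hS
  have hn0 : (n : ℝ) ≠ 0 := Nat.cast_ne_zero.mpr (by omega)
  set s : Finset (Fin n) := Finset.univ.erase i with hs
  have hi : i ∉ s := Finset.notMem_erase i Finset.univ
  have hcard : s.card = n - 1 := by
    rw [hs, Finset.card_erase_of_mem (Finset.mem_univ i), Finset.card_univ,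
      Fintype.card_fin]
  have huniv : (Finset.univ : Finset (Finset (Fin n))) = (insert i s).powerset := by
    rw [hs, Finset.insert_erase (Finset.mem_univ i), Finset.powerset_univ]
  rw [huniv, Finset.sum_powerset_insert hi]
  -- the two pieces as functions of cardinality
  have hrange : s.card + 1 = n := by omega
  have piece1 :
      ∑ T ∈ s.powerset, (shapW1 n (T.card - ({i} ∩ T).card)) ^ 2 / lev n T
        = ∑ j ∈ Finset.range n, ((n-1).choose j : ℝ) *
            (shapW1 n j ^ 2 * (((n + 1 : ℕ) : ℝ) * (n.choose j : ℝ))) := by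
    rw [sum_powerset_card_fn s _
      (fun j => shapW1 n j ^ 2 * (((n + 1 : ℕ) : ℝ) * (n.choose j : ℝ)))
      (fun T hT => ?_), hrange, hcard]
    have hiT : i ∉ T := fun h => hi (hT h)
    rw [Finset.singleton_inter_of_notMem hiT, Finset.card_empty, Nat.sub_zero, lev,
      div_div_eq_mul_div, div_one]
  have piece2 :
      ∑ T ∈ s.powerset,
          (shapW1 n ((insert i T).card - ({i} ∩ insert i T).card)) ^ 2
            / lev n (insert i T)
        = ∑ j ∈ Finset.range n, ((n-1).choose j : ℝ) *
            (shapW1 n j ^ 2 * (((n + 1 : ℕ) : ℝ) * (n.choose (j+1) : ℝ))) := by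
    rw [sum_powerset_card_fn s _
      (fun j => shapW1 n j ^ 2 * (((n + 1 : ℕ) : ℝ) * (n.choose (j+1) : ℝ)))
      (fun T hT => ?_), hrange, hcard]
    have hiT : i ∉ T := fun h => hi (hT h)
    have hins : (insert i T).card = T.card + 1 := Finset.card_insert_of_notMem hiT
    have hint : {i} ∩ insert i T = {i} :=
      Finset.singleton_inter_of_mem (Finset.mem_insert_self i T)
    rw [hins, hint, Finset.card_singleton, Nat.add_sub_cancel, lev, hins,
      div_div_eq_mul_div, div_one]
  rw [piece1, piece2]
  -- nat binomial identities
  have e1n : ∀ j < n, (n - j) * n.choose j = n * (n-1).choose j := by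
    intro j hj
    have h1 := Nat.add_one_mul_choose_eq (n-1) (n-1-j)
    have hsucc : n - 1 + 1 = n := by omega
    have hidx : n - 1 - j + 1 = n - j := by omega
    rw [hsucc, hidx, Nat.choose_symm (by omega : j ≤ n - 1)] at h1
    have h2 : n.choose (n - j) = n.choose j := Nat.choose_symm (by omega)
    rw [h2] at h1
    exact (Nat.mul_comm _ _).trans h1.symm
  have e2n : ∀ j : ℕ, (j + 1) * n.choose (j+1) = n * (n-1).choose j := by
    intro j
    have h1 := Nat.add_one_mul_choose_eq (n-1) j
    have hsucc : n - 1 + 1 = n := by omega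
    rw [hsucc] at h1
    exact (Nat.mul_comm _ _).trans h1.symm
  -- termwise identities in ℝ
  have term1 : ∀ j ∈ Finset.range n,
      ((n-1).choose j : ℝ) * (shapW1 n j ^ 2 * (((n + 1 : ℕ) : ℝ) * (n.choose j : ℝ)))
        = ((n : ℝ) + 1) / n * (1 / ((n - j : ℕ) : ℝ)) := by
    intro j hj
    have hj' : j < n := Finset.mem_range.mp hj
    have hc0 : ((n-1).choose j : ℝ) ≠ 0 :=
      Nat.cast_ne_zero.mpr ((Nat.choose_pos (by omega)).ne')
    have hnj0 : ((n - j : ℕ) : ℝ) ≠ 0 := Nat.cast_ne_zero.mpr (by omega)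
    have e1 : ((n - j : ℕ) : ℝ) * (n.choose j : ℝ) = (n : ℝ) * ((n-1).choose j : ℝ) := by
      exact_mod_cast congrArg (Nat.cast : ℕ → ℝ) (e1n j hj')
    rw [shapW1]
    push_cast
    field_simp
    linear_combination e1
  have term2 : ∀ j ∈ Finset.range n,
      ((n-1).choose j : ℝ) * (shapW1 n j ^ 2 * (((n + 1 : ℕ) : ℝ) * (n.choose (j+1) : ℝ)))
        = ((n : ℝ) + 1) / n * (1 / ((j : ℝ) + 1)) := by
    intro j hj
    have hj' : j < n := Finset.mem_range.mp hj
    have hc0 : ((n-1).choose j : ℝ) ≠ 0 :=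
      Nat.cast_ne_zero.mpr ((Nat.choose_pos (by omega)).ne')
    have hj10 : ((j : ℝ) + 1) ≠ 0 := by positivity
    have e2 : ((j : ℝ) + 1) * (n.choose (j+1) : ℝ) = (n : ℝ) * ((n-1).choose j : ℝ) := by
      exact_mod_cast congrArg (Nat.cast : ℕ → ℝ) (e2n j)
    rw [shapW1]
    push_cast
    field_simp
    linear_combination e2
  rw [Finset.sum_congr rfl term1, Finset.sum_congr rfl term2]
  have hreflect : ∑ j ∈ Finset.range n, (1 : ℝ) / ((n - j : ℕ) : ℝ)
      = ∑ j ∈ Finset.range n, (1 : ℝ) / ((j : ℝ) + 1) := by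
    rw [← Finset.sum_range_reflect (fun j => (1 : ℝ) / ((n - j : ℕ) : ℝ)) n]
    refine Finset.sum_congr rfl fun j hj => ?_
    have hj' : j < n := Finset.mem_range.mp hj
    have : n - (n - 1 - j) = j + 1 := by omega
    rw [this]
    push_cast
    ring
  rw [← Finset.mul_sum, ← Finset.mul_sum, hreflect]
  ring
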